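/- The largest eigenvalue of the adjacency matrix of the graph H₀^p equals √((5+√13)/2). That is, √((5+√13)/2) is an eigenvalue of this real symmetric matrix, and every real eigenvalue of it is at most √((5+√13)/2). -/

import Mathlib

/-- The edges of the Haagerup principal graph `H₀^p`, with vertices
`c₀,c₁,c₂,c₃,u₁,u₂,s₁,s₂,t₁,t₂` numbered `0,…,9`. -/
def H0edges : List (Fin 10 × Fin 10) :=
  [(0, 1), (1, 2), (2, 3), (3, 4), (3, 5), (4, 6), (5, 7), (6, 8), (7, 9)]

/-- The adjacency matrix of the Haagerup principal graph `H₀^p`. -/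
def H0adj : Matrix (Fin 10) (Fin 10) ℝ :=
  Matrix.of fun i j => if (i, j) ∈ H0edges ∨ (j, i) ∈ H0edges then 1 else 0

/-- A Perron–Frobenius eigenvector for `H0adj`. -/
def wvec (d : ℝ) : Fin 10 → ℝ := fun i =>
  if i = 3 then d^3 - 2*d
  else if i = 2 ∨ i = 4 ∨ i = 5 then d^2 - 1
  else if i = 1 ∨ i = 6 ∨ i = 7 then d
  else 1

lemma wvec_eig (d : ℝ) (h4 : d^4 = 5*d^2 - 3) :
    H0adj.mulVec (wvec d) = d • (wvec d) := by
  funext i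
  fin_cases i <;>
    simp (config := { decide := true }) [Matrix.mulVec, dotProduct,
      Fin.sum_univ_succ, H0adj, H0edges, wvec] <;>
    nlinarith [h4]

lemma wvec_pos (d : ℝ) (hd : 2 ≤ d) (i : Fin 10) : 0 < wvec d i := by
  fin_cases i <;> simp (config := { decide := true }) [wvec] <;> nlinarith [hd, le_abs_self d, mul_nonneg (sq_nonneg d) (by linarith : (0:ℝ) ≤ d - 2)]

lemma H0adj_nonneg (i j : Fin 10) : 0 ≤ H0adj i j := by
  unfold H0adj
  simp only [Matrix.of_apply]
  split <;> norm_num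

/-- The largest eigenvalue of the adjacency matrix of `H₀^p` is `√((5+√13)/2)`. -/
theorem stmt_16 :
    (∃ v : Fin 10 → ℝ, v ≠ 0 ∧
        H0adj.mulVec v = Real.sqrt ((5 + Real.sqrt 13) / 2) • v) ∧
    (∀ μ : ℝ, (∃ v : Fin 10 → ℝ, v ≠ 0 ∧ H0adj.mulVec v = μ • v) →
        μ ≤ Real.sqrt ((5 + Real.sqrt 13) / 2)) := by
  set d := Real.sqrt ((5 + Real.sqrt 13) / 2) with hd_def
  have hs13 : Real.sqrt 13 ^ 2 = 13 := Real.sq_sqrt (by norm_num)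
  have hs13' : (3 : ℝ) ≤ Real.sqrt 13 := by
    nlinarith [hs13, Real.sqrt_nonneg 13]
  have hd2 : d ^ 2 = (5 + Real.sqrt 13) / 2 := by
    rw [hd_def]
    exact Real.sq_sqrt (by nlinarith [Real.sqrt_nonneg 13])
  have hdnn : 0 ≤ d := Real.sqrt_nonneg _
  have hd : 2 ≤ d := by nlinarith [hd2, hs13']
  have h4 : d ^ 4 = 5 * d ^ 2 - 3 := by nlinarith [hd2, hs13]
  have heig := wvec_eig d h4
  have hwpos := wvec_pos d hd
  constructor
  · refine ⟨wvec d, ?_, heig⟩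
    intro h
    have := congrFun h 0
    simp only [Pi.zero_apply] at this
    exact absurd this (ne_of_gt (hwpos 0))
  · rintro μ ⟨v, hv0, hv⟩
    -- pointwise form of the eigen equations
    have hvi : ∀ i : Fin 10, ∑ j, H0adj i j * v j = μ * v i := by
      intro i
      have := congrFun hv i
      simpa [Matrix.mulVec, dotProduct] using this
    have hwi : ∀ i : Fin 10, ∑ j, H0adj i j * wvec d j = d * wvec d i := by
      intro i
      have := congrFun heig i
      simpa [Matrix.mulVec, dotProduct] using this
    -- choose index maximizing |v j| / w j
    obtain ⟨i, -, hi⟩ := Finset.exists_max_image Finset.univ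
      (fun j => |v j| / wvec d j) ⟨0, Finset.mem_univ 0⟩
    set c := |v i| / wvec d i with hc_def
    have hbound : ∀ j, |v j| ≤ c * wvec d j := by
      intro j
      have := hi j (Finset.mem_univ j)
      exact (div_le_iff₀ (hwpos j)).mp this
    have hcpos : 0 < c := by
      obtain ⟨k, hk⟩ := Function.ne_iff.mp hv0
      have h1 : 0 < |v k| / wvec d k := div_pos (abs_pos.mpr hk) (hwpos k)
      exact lt_of_lt_of_le h1 (hi k (Finset.mem_univ k))
    have hvic : |v i| = c * wvec d i := by
      rw [hc_def, div_mul_cancel₀ _ (ne_of_gt (hwpos i))]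
    -- main estimate at the maximizing index
    have key : |μ| * (c * wvec d i) ≤ c * (d * wvec d i) := by
      calc |μ| * (c * wvec d i) = |μ * v i| := by
            rw [abs_mul, hvic]
        _ = |∑ j, H0adj i j * v j| := by rw [hvi i]
        _ ≤ ∑ j, |H0adj i j * v j| := Finset.abs_sum_le_sum_abs _ _
        _ = ∑ j, H0adj i j * |v j| := by
            refine Finset.sum_congr rfl fun j _ => ?_
            rw [abs_mul, abs_of_nonneg (H0adj_nonneg i j)]
        _ ≤ ∑ j, H0adj i j * (c * wvec d j) := by
            refine Finset.sum_le_sum fun j _ => ?_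
            exact mul_le_mul_of_nonneg_left (hbound j) (H0adj_nonneg i j)
        _ = c * ∑ j, H0adj i j * wvec d j := by
            rw [Finset.mul_sum]; refine Finset.sum_congr rfl fun j _ => by ring
        _ = c * (d * wvec d i) := by rw [hwi i]
    have hpos : 0 < c * wvec d i := mul_pos hcpos (hwpos i)
    have habs : |μ| ≤ d := by
      have := (mul_le_mul_iff_left₀ hpos).mp (by linarith [key] : |μ| * (c * wvec d i) ≤ d * (c * wvec d i))
      exact this
    exact le_trans (le_abs_self μ) habs
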